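/- Let (X,d) be a metric space, x₀ ∈ X, and let η_n (n ∈ ℤ₊) be Borel measures on X with η_n(X∖U) < ∞ for every Borel neighbourhood U of x₀. Suppose (a) limsup_{n→∞} η_n(X∖U) ≤ η₀(X∖U) for every open neighbourhood U of x₀, and (b) liminf_{n→∞} η_n(X∖V) ≥ η₀(X∖V) for every closed neighbourhood V of x₀. Then η_n(X∖U) → η₀(X∖U) for every Borel neighbourhood U of x₀ with η₀(∂U) = 0. -/
import Mathlib


open MeasureTheory Filter Topology

/-- A Borel neighbourhood of `x₀` is a Borel set containing an open set containing `x₀`. -/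
def IsBorelNbhd {X : Type*} [TopologicalSpace X] [MeasurableSpace X]
    (x₀ : X) (U : Set X) : Prop :=
  MeasurableSet U ∧ ∃ V : Set X, IsOpen V ∧ x₀ ∈ V ∧ V ⊆ U

/-- Weak convergence of bounded measures: `μs n A → μ A` for every Borel set `A`
whose boundary is a `μ`-null set. -/
def WeaklyConvergesTo {X : Type*} [TopologicalSpace X] [MeasurableSpace X]
    (μs : ℕ → Measure X) (μ : Measure X) : Prop :=
  ∀ A : Set X, MeasurableSet A → μ (frontier A) = 0 →
    Tendsto (fun n => μs n A) atTop (𝓝 (μ A))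


theorem portmanteau_vi_implies_iii {X : Type*} [MetricSpace X] [MeasurableSpace X] [BorelSpace X]
    (x₀ : X) (η : ℕ → Measure X) (η₀ : Measure X)
    (hfin₀ : ∀ U : Set X, IsBorelNbhd x₀ U → η₀ Uᶜ < ⊤)
    (hfin : ∀ n : ℕ, ∀ U : Set X, IsBorelNbhd x₀ U → η n Uᶜ < ⊤)
    (ha : ∀ U : Set X, IsOpen U → x₀ ∈ U →
      limsup (fun n => η n Uᶜ) atTop ≤ η₀ Uᶜ)
    (hb : ∀ V : Set X, IsClosed V → x₀ ∈ interior V →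
      η₀ Vᶜ ≤ liminf (fun n => η n Vᶜ) atTop) :
    ∀ U : Set X, IsBorelNbhd x₀ U → η₀ (frontier U) = 0 →
      Tendsto (fun n => η n Uᶜ) atTop (𝓝 (η₀ Uᶜ)) := by
  intro U hU hfr
  obtain ⟨hUm, V, hVopen, hxV, hVU⟩ := hU
  have hxint : x₀ ∈ interior U := interior_maximal hVU hVopen hxV
  have h1 : η₀ ((interior U)ᶜ) = η₀ Uᶜ := by
    apply le_antisymm
    · calc η₀ ((interior U)ᶜ) ≤ η₀ (Uᶜ ∪ frontier U) := by
            apply measure_mono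
            intro x hx
            by_cases hxU : x ∈ U
            · exact Or.inr ⟨subset_closure hxU, hx⟩
            · exact Or.inl hxU
        _ ≤ η₀ Uᶜ + η₀ (frontier U) := measure_union_le _ _
        _ = η₀ Uᶜ := by rw [hfr, add_zero]
    · exact measure_mono (Set.compl_subset_compl.mpr interior_subset)
  have h2 : η₀ ((closure U)ᶜ) = η₀ Uᶜ := by
    apply le_antisymm
    · exact measure_mono (Set.compl_subset_compl.mpr subset_closure)
    · calc η₀ Uᶜ ≤ η₀ ((closure U)ᶜ ∪ frontier U) := by
            apply measure_mono
            intro x hx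
            by_cases hc : x ∈ closure U
            · exact Or.inr ⟨hc, fun hi => hx (interior_subset hi)⟩
            · exact Or.inl hc
        _ ≤ η₀ ((closure U)ᶜ) + η₀ (frontier U) := measure_union_le _ _
        _ = η₀ ((closure U)ᶜ) := by rw [hfr, add_zero]
  have hup : limsup (fun n => η n Uᶜ) atTop ≤ η₀ Uᶜ := by
    calc limsup (fun n => η n Uᶜ) atTop
        ≤ limsup (fun n => η n ((interior U)ᶜ)) atTop :=
          limsup_le_limsup (Eventually.of_forall fun n =>
            measure_mono (Set.compl_subset_compl.mpr interior_subset))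
      _ ≤ η₀ ((interior U)ᶜ) := ha _ isOpen_interior hxint
      _ = η₀ Uᶜ := h1
  have hlo : η₀ Uᶜ ≤ liminf (fun n => η n Uᶜ) atTop := by
    calc η₀ Uᶜ = η₀ ((closure U)ᶜ) := h2.symm
      _ ≤ liminf (fun n => η n ((closure U)ᶜ)) atTop :=
          hb _ isClosed_closure (interior_mono subset_closure hxint)
      _ ≤ liminf (fun n => η n Uᶜ) atTop :=
          liminf_le_liminf (Eventually.of_forall fun n =>
            measure_mono (Set.compl_subset_compl.mpr subset_closure))
  exact tendsto_of_le_liminf_of_limsup_le hlo hup
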